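/- Assume E(|u|²) < ∞ μ-a.e. Then the following are equivalent: (a) D(EM_u) = {f ∈ L²(μ) : ū·(P f) ∈ L²(μ)} and ∫_X |EM_u f|² dμ = ∫_X |u|²·|P f|² dμ for every f ∈ D(EM_u) (i.e., the closed densely defined operator EM_u is normal, ‖(EM_u) f‖ = ‖(EM_u)* f‖ on the common domain); (b) u is μ-a.e. equal to an 𝒜-measurable function. -/

import Mathlib

open MeasureTheory Filter ENNReal NNReal

noncomputable section

variable {X : Type*}

/-- A set `A` in the sub-σ-algebra `m` is *admissible* for the weight `u` if
`μ A + ∫_A |u|² dμ < ∞`. -/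
def Admissible (m : MeasurableSpace X) [m0 : MeasurableSpace X] (μ : Measure X)
    (u : X → ℂ) (A : Set X) : Prop :=
  MeasurableSet[m] A ∧ μ A + ∫⁻ x in A, (‖u x‖₊ : ℝ≥0∞) ^ 2 ∂μ < ⊤

/-- `gf` is a version of `E(u·f)`, i.e. `gf` is an `m`-measurable function in `L²(μ)` with
`∫_A u·f dμ = ∫_A gf dμ` for every admissible `A`.  `f ∈ D(EM_u)` iff `f ∈ L²(μ)` and such a
`gf` exists. -/
def IsWCE (m : MeasurableSpace X) [m0 : MeasurableSpace X] (μ : Measure X)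
    (u f gf : X → ℂ) : Prop :=
  StronglyMeasurable[m] gf ∧ MemLp gf 2 μ ∧
    ∀ A : Set X, Admissible m μ u A → ∫ x in A, u x * f x ∂μ = ∫ x in A, gf x ∂μ


section helpers
variable {α : Type*} {mα : MeasurableSpace α} {ν : Measure α}

lemma sq_eLpNorm (f : α → ℂ) : eLpNorm f 2 ν ^ 2 = ∫⁻ x, (‖f x‖₊ : ℝ≥0∞) ^ 2 ∂ν := by
  rw [eLpNorm_eq_lintegral_rpow_enorm_toReal two_ne_zero ENNReal.ofNat_ne_top]
  rw [← ENNReal.rpow_natCast _ 2, ← ENNReal.rpow_mul]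
  norm_num
  simp only [enorm_eq_nnnorm]

lemma memLp_two_of (f : α → ℂ) (hf : AEStronglyMeasurable f ν)
    (h : ∫⁻ x, (‖f x‖₊ : ℝ≥0∞) ^ 2 ∂ν < ⊤) : MemLp f 2 ν := by
  refine ⟨hf, ?_⟩
  rw [← sq_eLpNorm] at h
  by_contra hc
  rw [not_lt, top_le_iff] at hc
  rw [hc, ENNReal.top_pow two_ne_zero] at h
  exact (lt_irrefl _ h)

lemma intOn_of_memLp_two (f : α → ℂ) (hf : MemLp f 2 ν) {s : Set α} (hs : ν s < ⊤) :
    IntegrableOn f s ν := by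
  haveI : IsFiniteMeasure (ν.restrict s) :=
    ⟨by rw [Measure.restrict_apply_univ]; exact hs⟩
  exact (hf.restrict s).integrable one_le_two

lemma sq_inj {a b : ℝ≥0∞} (h : a ^ 2 = b ^ 2) : a = b := by
  have h2 : ∀ c : ℝ≥0∞, (c ^ 2) ^ (1/2 : ℝ) = c := fun c => by
    rw [← ENNReal.rpow_natCast c 2, ← ENNReal.rpow_mul]; norm_num
  rw [← h2 a, ← h2 b, h]

end helpers

lemma glue_aux {Y : Type*} {m : MeasurableSpace Y} {m0 : MeasurableSpace Y} {μ : Measure Y}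
    (u : Y → ℂ) (A : ℕ → Set Y) (hA : ∀ n, MeasurableSet[m] (A n))
    (hcov : ∀ᵐ x ∂μ, ∃ n, x ∈ A n)
    (w : ℕ → Y → ℂ) (hw : ∀ n, StronglyMeasurable[m] (w n))
    (heq : ∀ n, (A n).indicator u =ᵐ[μ] w n) :
    ∃ u' : Y → ℂ, StronglyMeasurable[m] u' ∧ u =ᵐ[μ] u' := by
  classical
  have hp : ∀ x, ∃ n, (A n ∪ (⋃ k, A k)ᶜ) x := fun x => by
    by_cases h : x ∈ ⋃ k, A k
    · obtain ⟨k, hk⟩ := Set.mem_iUnion.mp h; exact ⟨k, Set.mem_union_left _ hk⟩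
    · exact ⟨0, Set.mem_union_right _ h⟩
  refine ⟨fun x => w (Nat.find (hp x)) x, ?_, ?_⟩
  · have hmeas : Measurable[m] fun x => w (Nat.find (hp x)) x := by
      letI : MeasurableSpace Y := m
      letI : ∀ n, DecidablePred (A n ∪ (⋃ k, A k)ᶜ : Set Y) := fun n x => Classical.propDecidable _
      exact Measurable.find (fun n => (hw n).measurable)
        (fun n => (hA n).union ((MeasurableSet.iUnion hA).compl)) hp
    exact hmeas.stronglyMeasurable
  · filter_upwards [hcov, ae_all_iff.mpr heq] with x hx hxe
    obtain ⟨n, hn⟩ := hx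
    have hmem : x ∈ A (Nat.find (hp x)) := by
      rcases Nat.find_spec (hp x) with h | h
      · exact h
      · exact absurd (Set.mem_iUnion.mpr ⟨n, hn⟩) h
    calc u x = (A (Nat.find (hp x))).indicator u x := (Set.indicator_of_mem hmem u).symm
    _ = w (Nat.find (hp x)) x := hxe _

set_option maxHeartbeats 1000000 in
set_option synthInstance.maxHeartbeats 1000000 in
theorem fwd (m : MeasurableSpace X) [m0 : MeasurableSpace X] (hm : m ≤ m0)
    (μ : Measure X) [SigmaFinite μ] [SigmaFinite (μ.trim hm)]
    (u : X → ℂ) (hu : Measurable u)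
    (g : X → ℝ≥0∞) (hgm : Measurable[m] g)
    (hg : ∀ A : Set X, MeasurableSet[m] A →
      ∫⁻ x in A, (‖u x‖₊ : ℝ≥0∞) ^ 2 ∂μ = ∫⁻ x in A, g x ∂μ)
    (hgfin : ∀ᵐ x ∂μ, g x < ⊤)
    (hyp2 : ∀ (f : Lp ℂ 2 μ) (gf : X → ℂ), IsWCE m μ u (⇑f) gf →
        ∫⁻ x, (‖gf x‖₊ : ℝ≥0∞) ^ 2 ∂μ =
          ∫⁻ x, (‖u x‖₊ : ℝ≥0∞) ^ 2 *
            (‖(↑(condExpL2 ℂ ℂ hm f) : Lp ℂ 2 μ) x‖₊ : ℝ≥0∞) ^ 2 ∂μ) :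
    ∃ u' : X → ℂ, StronglyMeasurable[m] u' ∧ u =ᵐ[μ] u' := by
  set A : ℕ → Set X := fun n => spanningSets (μ.trim hm) n ∩ {x | g x ≤ (n : ℝ≥0∞)} with hA
  have hSm : ∀ n, MeasurableSet[m] (spanningSets (μ.trim hm) n) :=
    fun n => measurableSet_spanningSets _ n
  have hAm : ∀ n, MeasurableSet[m] (A n) := fun n => (hSm n).inter (hgm measurableSet_Iic)
  have hμA : ∀ n, μ (A n) < ⊤ := by
    intro n
    have h1 : μ (A n) ≤ μ (spanningSets (μ.trim hm) n) := measure_mono Set.inter_subset_left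
    have h2 : μ (spanningSets (μ.trim hm) n) = μ.trim hm (spanningSets (μ.trim hm) n) :=
      (trim_measurableSet_eq hm (hSm n)).symm
    rw [h2] at h1
    exact h1.trans_lt (measure_spanningSets_lt_top _ n)
  have hIA : ∀ n, ∫⁻ x in A n, (‖u x‖₊ : ℝ≥0∞) ^ 2 ∂μ < ⊤ := by
    intro n
    rw [hg _ (hAm n)]
    calc ∫⁻ x in A n, g x ∂μ ≤ ∫⁻ _x in A n, (n : ℝ≥0∞) ∂μ := by
          refine lintegral_mono_ae ?_
          filter_upwards [ae_restrict_mem (hm _ (hAm n))] with x hx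
          exact hx.2
    _ = n * μ (A n) := setLIntegral_const _ _
    _ < ⊤ := ENNReal.mul_lt_top (ENNReal.natCast_lt_top n) (hμA n)
  have hcov : ∀ᵐ x ∂μ, ∃ n, x ∈ A n := by
    filter_upwards [hgfin] with x hx
    have hx1 : x ∈ ⋃ n, spanningSets (μ.trim hm) n := by rw [iUnion_spanningSets]; trivial
    obtain ⟨k, hk⟩ := Set.mem_iUnion.mp hx1
    obtain ⟨j, hj⟩ := ENNReal.exists_nat_gt hx.ne
    refine ⟨max k j, Set.mem_inter (monotone_spanningSets _ (le_max_left k j) hk) ?_⟩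
    refine le_trans hj.le ?_
    exact_mod_cast Nat.cast_le.mpr (le_max_right k j)
  have main : ∀ n, ∃ w : X → ℂ, StronglyMeasurable[m] w ∧ (A n).indicator u =ᵐ[μ] w := by
    intro n
    have hWmem : MemLp ((A n).indicator u) 2 μ := by
      refine memLp_two_of _ ((hu.indicator (hm _ (hAm n))).aestronglyMeasurable) ?_
      have heq : ∀ x, (‖(A n).indicator u x‖₊ : ℝ≥0∞) ^ 2
          = (A n).indicator (fun x => (‖u x‖₊ : ℝ≥0∞) ^ 2) x := by
        intro x
        by_cases hx : x ∈ A n <;> simp [Set.indicator_of_mem, Set.indicator_of_notMem, hx]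
      rw [lintegral_congr heq, lintegral_indicator (hm _ (hAm n))]
      exact hIA n
    set W := hWmem.toLp _ with hW
    obtain ⟨w, hwm, hweq⟩ := lpMeas.aestronglyMeasurable (condExpL2 ℂ ℂ hm W)
    set fA := indicatorConstLp 2 (hm _ (hAm n)) (hμA n).ne (1 : ℂ) with hfA
    have hfAeq : ⇑fA =ᵐ[μ] (A n).indicator (fun _ => (1 : ℂ)) := indicatorConstLp_coeFn
    have hwce : IsWCE m μ u (⇑fA) w := by
      refine ⟨hwm, (Lp.memLp _).ae_eq hweq, fun B hB => ?_⟩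
      have hμB : μ B < ⊤ := le_self_add.trans_lt hB.2
      calc ∫ x in B, u x * fA x ∂μ = ∫ x in B, W x ∂μ := by
            refine integral_congr_ae ?_
            filter_upwards [ae_restrict_of_ae hfAeq, ae_restrict_of_ae hWmem.coeFn_toLp]
              with x h1 h2
            rw [h1, h2]
            by_cases hx : x ∈ A n <;> simp [hx]
      _ = ∫ x in B, (↑(condExpL2 ℂ ℂ hm W) : Lp ℂ 2 μ) x ∂μ :=
            (integral_condExpL2_eq hm W hB.1 hμB.ne).symm
      _ = ∫ x in B, w x ∂μ := integral_congr_ae (ae_restrict_of_ae hweq)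
    have happ := hyp2 fA w hwce
    have hPfA : (↑(condExpL2 ℂ ℂ hm fA) : Lp ℂ 2 μ) = fA :=
      condExpL2_indicator_of_measurable hm (hAm n) (hμA n).ne (1 : ℂ)
    have hRHS : ∫⁻ x, (‖u x‖₊ : ℝ≥0∞) ^ 2 *
          (‖(↑(condExpL2 ℂ ℂ hm fA) : Lp ℂ 2 μ) x‖₊ : ℝ≥0∞) ^ 2 ∂μ
        = ∫⁻ x, (‖(W : X → ℂ) x‖₊ : ℝ≥0∞) ^ 2 ∂μ := by
      rw [hPfA]
      refine lintegral_congr_ae ?_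
      filter_upwards [hfAeq, hWmem.coeFn_toLp] with x h1 h2
      rw [h1, h2]
      by_cases hx : x ∈ A n <;> simp [hx]
    have hLHS : ∫⁻ x, (‖w x‖₊ : ℝ≥0∞) ^ 2 ∂μ
        = ∫⁻ x, (‖(↑(condExpL2 ℂ ℂ hm W) : Lp ℂ 2 μ) x‖₊ : ℝ≥0∞) ^ 2 ∂μ :=
      lintegral_congr_ae ((hweq.symm).mono fun x hx => by dsimp only; rw [hx])
    have hnorm : ‖(↑(condExpL2 ℂ ℂ hm W) : Lp ℂ 2 μ)‖ = ‖W‖ := by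
      have h1 : eLpNorm (⇑(↑(condExpL2 ℂ ℂ hm W) : Lp ℂ 2 μ)) 2 μ = eLpNorm (⇑W) 2 μ := by
        refine sq_inj ?_
        rw [sq_eLpNorm, sq_eLpNorm, ← hLHS, happ, hRHS]
      rw [Lp.norm_def, Lp.norm_def, h1]
    have hproj : (↑(condExpL2 ℂ ℂ hm W) : Lp ℂ 2 μ) = W := by
      haveI : Fact (m ≤ m0) := ⟨hm⟩
      have hdef : condExpL2 ℂ ℂ hm W = Submodule.orthogonalProjection (lpMeas ℂ ℂ m 2 μ) W := rfl
      rw [hdef] at hnorm ⊢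
      have hortho : inner (𝕜 := ℂ)
          (W - (Submodule.orthogonalProjection (lpMeas ℂ ℂ m 2 μ) W : Lp ℂ 2 μ))
          ((Submodule.orthogonalProjection (lpMeas ℂ ℂ m 2 μ) W : Lp ℂ 2 μ)) = 0 :=
        Submodule.starProjection_inner_eq_zero W _ (SetLike.coe_mem _)
      have hpyth := norm_add_sq_eq_norm_sq_add_norm_sq_of_inner_eq_zero _ _ hortho
      rw [sub_add_cancel] at hpyth
      have hz0 : ‖W - (Submodule.orthogonalProjection (lpMeas ℂ ℂ m 2 μ) W : Lp ℂ 2 μ)‖ *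
          ‖W - (Submodule.orthogonalProjection (lpMeas ℂ ℂ m 2 μ) W : Lp ℂ 2 μ)‖ = 0 := by
        rw [hnorm] at hpyth; linarith
      have hz : ‖W - (Submodule.orthogonalProjection (lpMeas ℂ ℂ m 2 μ) W : Lp ℂ 2 μ)‖ = 0 :=
        mul_self_eq_zero.mp hz0
      have := sub_eq_zero.mp (norm_eq_zero.mp hz)
      exact this.symm
    refine ⟨w, hwm, ?_⟩
    exact hWmem.coeFn_toLp.symm.trans ((hproj ▸ hweq : ⇑W =ᵐ[μ] w))
  choose w hwm hweq using main
  exact glue_aux u A hAm hcov w hwm hweq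

set_option maxHeartbeats 1000000 in
set_option synthInstance.maxHeartbeats 1000000 in
theorem bwd (m : MeasurableSpace X) [m0 : MeasurableSpace X] (hm : m ≤ m0)
    (μ : Measure X) [SigmaFinite μ] [SigmaFinite (μ.trim hm)]
    (u : X → ℂ) (hu : Measurable u)
    (g : X → ℝ≥0∞) (hgm : Measurable[m] g)
    (hg : ∀ A : Set X, MeasurableSet[m] A →
      ∫⁻ x in A, (‖u x‖₊ : ℝ≥0∞) ^ 2 ∂μ = ∫⁻ x in A, g x ∂μ)
    (hgfin : ∀ᵐ x ∂μ, g x < ⊤)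
    (u' : X → ℂ) (hu'm : StronglyMeasurable[m] u') (hu'ae : u =ᵐ[μ] u') :
    ((∀ f : Lp ℂ 2 μ,
        ((∃ gf : X → ℂ, IsWCE m μ u (f : X → ℂ) gf) ↔
          MemLp (fun x => (starRingEnd ℂ) (u x) * (↑(condExpL2 ℂ ℂ hm f) : Lp ℂ 2 μ) x) 2 μ)) ∧
      (∀ (f : Lp ℂ 2 μ) (gf : X → ℂ), IsWCE m μ u (f : X → ℂ) gf →
        ∫⁻ x, (‖gf x‖₊ : ℝ≥0∞) ^ 2 ∂μ =
          ∫⁻ x, (‖u x‖₊ : ℝ≥0∞) ^ 2 *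
            (‖(↑(condExpL2 ℂ ℂ hm f) : Lp ℂ 2 μ) x‖₊ : ℝ≥0∞) ^ 2 ∂μ)) := by
  haveI : Fact (m ≤ m0) := ⟨hm⟩
  -- |u'|² is a version of g
  have hGm : Measurable[m] fun x => (‖u' x‖₊ : ℝ≥0∞) ^ 2 := by
    letI : MeasurableSpace X := m
    exact (hu'm.measurable.nnnorm.coe_nnreal_ennreal).pow_const 2
  have hsetint : ∀ s : Set X, MeasurableSet[m] s →
      ∫⁻ x in s, (‖u' x‖₊ : ℝ≥0∞) ^ 2 ∂μ = ∫⁻ x in s, g x ∂μ := by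
    intro s hs
    rw [← hg s hs]
    refine lintegral_congr_ae ?_
    filter_upwards [ae_restrict_of_ae hu'ae] with x hx
    rw [hx]
  have hG : (fun x => (‖u' x‖₊ : ℝ≥0∞) ^ 2) =ᵐ[μ] g := by
    refine ae_eq_of_ae_eq_trim (hm := hm) ?_
    refine ae_eq_of_forall_setLIntegral_eq_of_sigmaFinite hGm hgm (fun s hs _ => ?_)
    rw [restrict_trim hm μ hs, lintegral_trim hm hGm, lintegral_trim hm hgm]
    exact hsetint s hs
  -- the master construction, for each f in L²
  have master : ∀ f : Lp ℂ 2 μ, ∃ φ : X → ℂ, StronglyMeasurable[m] φ ∧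
      (⇑(↑(condExpL2 ℂ ℂ hm f) : Lp ℂ 2 μ) =ᵐ[μ] φ) ∧
      (∀ A : Set X, Admissible m μ u A →
        ∫ x in A, u x * f x ∂μ = ∫ x in A, u' x * φ x ∂μ) ∧
      (∀ gf : X → ℂ, IsWCE m μ u (⇑f) gf → gf =ᵐ[μ] fun x => u' x * φ x) := by
    intro f
    obtain ⟨φ, hφm, hφeq⟩ := lpMeas.aestronglyMeasurable (condExpL2 ℂ ℂ hm f)
    have hφmem : MemLp φ 2 μ := (Lp.memLp _).ae_eq hφeq
    -- key integral identity on admissible sets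
    have keyL : ∀ A : Set X, Admissible m μ u A →
        ∫ x in A, u x * f x ∂μ = ∫ x in A, u' x * φ x ∂μ := by
      intro A hA
      obtain ⟨hAm, hAfin⟩ := hA
      have hμA : μ A < ⊤ := le_self_add.trans_lt hAfin
      have hIA : ∫⁻ x in A, (‖u x‖₊ : ℝ≥0∞) ^ 2 ∂μ < ⊤ := le_add_self.trans_lt hAfin
      set h : X → ℂ := A.indicator fun x => (starRingEnd ℂ) (u' x) with hh
      have hhm : StronglyMeasurable[m] h :=
        (RCLike.continuous_conj.comp_stronglyMeasurable hu'm).indicator hAm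
      have hmem : MemLp h 2 μ := by
        refine memLp_two_of _ ((hhm.mono hm).aestronglyMeasurable) ?_
        have he : ∀ x, (‖h x‖₊ : ℝ≥0∞) ^ 2
            = A.indicator (fun x => (‖u' x‖₊ : ℝ≥0∞) ^ 2) x := by
          intro x
          by_cases hx : x ∈ A <;> simp [hh, Set.indicator_of_mem, Set.indicator_of_notMem, hx]
        rw [lintegral_congr he, lintegral_indicator (hm A hAm)]
        have : ∫⁻ x in A, (‖u' x‖₊ : ℝ≥0∞) ^ 2 ∂μ = ∫⁻ x in A, (‖u x‖₊ : ℝ≥0∞) ^ 2 ∂μ := by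
          refine lintegral_congr_ae ?_
          filter_upwards [ae_restrict_of_ae hu'ae] with x hx
          rw [hx]
        rw [this]; exact hIA
      set H := hmem.toLp h with hH
      have hHm' : AEStronglyMeasurable[m] (⇑H) μ := ⟨h, hhm, hmem.coeFn_toLp⟩
      have hinner := inner_condExpL2_eq_inner_fun (E := ℂ) (𝕜 := ℂ) hm f H hHm'
      have hconj := congrArg (starRingEnd ℂ) hinner
      rw [inner_conj_symm, inner_conj_symm] at hconj
      -- hconj : ⟪H, ↑(condExpL2 f)⟫ = ⟪H, f⟫
      have hleft : (inner (𝕜 := ℂ) H (↑(condExpL2 ℂ ℂ hm f) : Lp ℂ 2 μ))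
          = ∫ x in A, u' x * φ x ∂μ := by
        rw [MeasureTheory.L2.inner_def]
        rw [← integral_indicator (hm A hAm)]
        refine integral_congr_ae ?_
        filter_upwards [hmem.coeFn_toLp, hφeq] with x h1 h2
        rw [RCLike.inner_apply, h1, h2]
        by_cases hx : x ∈ A <;>
          simp [hh, Set.indicator_of_mem, Set.indicator_of_notMem, hx, mul_comm]
      have hright : (inner (𝕜 := ℂ) H f) = ∫ x in A, u x * f x ∂μ := by
        rw [MeasureTheory.L2.inner_def]
        rw [← integral_indicator (hm A hAm)]
        refine integral_congr_ae ?_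
        filter_upwards [hmem.coeFn_toLp, hu'ae] with x h1 h2
        rw [RCLike.inner_apply, h1]
        by_cases hx : x ∈ A <;>
          simp [hh, Set.indicator_of_mem, Set.indicator_of_notMem, hx, h2, mul_comm]
      rw [← hleft, ← hright, hconj]
    -- uniqueness of the weak conditional expectation
    refine ⟨φ, hφm, hφeq, keyL, ?_⟩
    intro gf hwce
    obtain ⟨hgfm, hgfmem, hgfint⟩ := hwce
    set ψ : X → ℂ := fun x => u' x * φ x with hψ
    have hψm : StronglyMeasurable[m] ψ := hu'm.mul hφm
    have key : ∀ n : ℕ, gf =ᵐ[μ.restrict {x | g x ≤ (n : ℝ≥0∞)}] ψ := by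
      intro n
      set C := {x | g x ≤ (n : ℝ≥0∞)} with hC
      have hCm : MeasurableSet[m] C := hgm measurableSet_Iic
      haveI : SigmaFinite ((μ.restrict C).trim hm) := by
        rw [← restrict_trim hm μ hCm]; infer_instance
      refine ae_eq_of_forall_setIntegral_eq_of_sigmaFinite' hm
        (fun s _ hμs => intOn_of_memLp_two _ (hgfmem.restrict C) hμs)
        (fun s _ hμs => intOn_of_memLp_two _ ?_ hμs)
        (fun s hs hμs => ?_) ⟨gf, hgfm, EventuallyEq.rfl⟩ ⟨ψ, hψm, EventuallyEq.rfl⟩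
      · -- ψ ∈ L²(μ.restrict C)
        refine MemLp.of_le_mul (c := Real.sqrt n) (hφmem.restrict C)
          ((hψm.mono hm).aestronglyMeasurable.restrict) ?_
        filter_upwards [ae_restrict_mem (hm _ hCm), ae_restrict_of_ae hG] with x hxC hxg
        have h1 : (‖u' x‖₊ : ℝ≥0∞) ^ 2 ≤ (n : ℝ≥0∞) := by rw [hxg]; exact hxC
        have h2 : (‖u' x‖ : ℝ) ^ 2 ≤ (n : ℝ) := by
          rw [← ENNReal.coe_pow, ← ENNReal.coe_natCast, ENNReal.coe_le_coe] at h1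
          have := NNReal.coe_le_coe.mpr h1
          push_cast at this
          simpa [coe_nnnorm] using this
        have h3 : ‖u' x‖ ≤ Real.sqrt n := by
          nlinarith [Real.sq_sqrt (show (0:ℝ) ≤ (n:ℝ) by positivity),
            Real.sqrt_nonneg (n : ℝ), norm_nonneg (u' x)]
        calc ‖ψ x‖ = ‖u' x‖ * ‖φ x‖ := norm_mul _ _
        _ ≤ Real.sqrt n * ‖φ x‖ := mul_le_mul_of_nonneg_right h3 (norm_nonneg _)
      · -- equality of set integrals
        have hs0 : MeasurableSet s := hm s hs
        have hμsC : μ (s ∩ C) < ⊤ := by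
          rwa [Measure.restrict_apply hs0] at hμs
        have hadm : Admissible m μ u (s ∩ C) := by
          refine ⟨hs.inter hCm, ?_⟩
          have hle : ∫⁻ x in s ∩ C, (‖u x‖₊ : ℝ≥0∞) ^ 2 ∂μ ≤ n * μ (s ∩ C) := by
            rw [hg _ (hs.inter hCm)]
            calc ∫⁻ x in s ∩ C, g x ∂μ ≤ ∫⁻ _x in s ∩ C, (n : ℝ≥0∞) ∂μ := by
                  refine lintegral_mono_ae ?_
                  filter_upwards [ae_restrict_mem (hs0.inter (hm _ hCm))] with x hx
                  exact hx.2
            _ = n * μ (s ∩ C) := setLIntegral_const _ _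
          exact ENNReal.add_lt_top.mpr ⟨hμsC,
            hle.trans_lt (ENNReal.mul_lt_top (ENNReal.natCast_lt_top n) hμsC)⟩
        have h1 : ∫ x in s, gf x ∂(μ.restrict C) = ∫ x in s ∩ C, gf x ∂μ := by
          rw [Measure.restrict_restrict hs0]
        have h2 : ∫ x in s, ψ x ∂(μ.restrict C) = ∫ x in s ∩ C, ψ x ∂μ := by
          rw [Measure.restrict_restrict hs0]
        rw [h1, h2, ← hgfint _ hadm, keyL _ hadm]
    -- glue the restricted a.e. equalities
    have hE : MeasurableSet {x | ¬ gf x = ψ x} := by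
      have := (measurableSet_eq_fun (hgfm.mono hm).measurable (hψm.mono hm).measurable).compl
      rwa [Set.compl_setOf] at this
    have hEn : ∀ n : ℕ, μ ({x | ¬ gf x = ψ x} ∩ {x | g x ≤ (n : ℝ≥0∞)}) = 0 := by
      intro n
      have h0 := key n
      have h1 : μ.restrict {x | g x ≤ (n : ℝ≥0∞)} {x | ¬ gf x = ψ x} = 0 := ae_iff.mp h0
      rwa [Measure.restrict_apply hE] at h1
    have htop : μ {x | ¬ g x < ⊤} = 0 := ae_iff.mp hgfin
    have hsub : {x | ¬ gf x = ψ x} ⊆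
        (⋃ n : ℕ, {x | ¬ gf x = ψ x} ∩ {x | g x ≤ (n : ℝ≥0∞)}) ∪ {x | ¬ g x < ⊤} := by
      intro x hx
      by_cases hgx : g x < ⊤
      · obtain ⟨n, hn⟩ := ENNReal.exists_nat_gt hgx.ne
        exact Or.inl (Set.mem_iUnion.mpr ⟨n, ⟨hx, hn.le⟩⟩)
      · exact Or.inr hgx
    exact ae_iff.mpr (measure_mono_null hsub
      (measure_union_null (measure_iUnion_null hEn) htop))
  -- assemble
  constructor
  · intro f
    obtain ⟨φ, hφm, hφeq, keyL, uniq⟩ := master f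
    constructor
    · rintro ⟨gf, hwce⟩
      have hgfψ := uniq gf hwce
      refine ⟨((continuous_star.measurable.comp hu).aestronglyMeasurable).mul
        (Lp.aestronglyMeasurable _), ?_⟩
      have hnorm : ∀ᵐ x ∂μ, ‖(starRingEnd ℂ) (u x) * (↑(condExpL2 ℂ ℂ hm f) : Lp ℂ 2 μ) x‖
          = ‖gf x‖ := by
        filter_upwards [hu'ae, hφeq, hgfψ] with x h1 h2 h3
        rw [h3, norm_mul, norm_mul, RCLike.norm_conj, h1, h2]
      rw [eLpNorm_congr_norm_ae hnorm]
      exact hwce.2.1.2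
    · intro hmem
      refine ⟨fun x => u' x * φ x, hu'm.mul hφm, ?_, keyL⟩
      have hnorm : ∀ᵐ x ∂μ, ‖u' x * φ x‖
          = ‖(starRingEnd ℂ) (u x) * (↑(condExpL2 ℂ ℂ hm f) : Lp ℂ 2 μ) x‖ := by
        filter_upwards [hu'ae, hφeq] with x h1 h2
        rw [norm_mul, norm_mul, RCLike.norm_conj, h1, h2]
      exact ⟨((hu'm.mul hφm).mono hm).aestronglyMeasurable,
        by rw [eLpNorm_congr_norm_ae hnorm]; exact hmem.2⟩
  · intro f gf hwce
    obtain ⟨φ, hφm, hφeq, keyL, uniq⟩ := master f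
    have hgfψ := uniq gf hwce
    refine lintegral_congr_ae ?_
    filter_upwards [hu'ae, hφeq, hgfψ] with x h1 h2 h3
    rw [h3, h2, h1]
    simp [nnnorm_mul, ENNReal.coe_mul, mul_pow]

/-- With `E(|u|²) < ∞` a.e., `EM_u` is normal (its domain coincides with the
domain `{f : ū·(P f) ∈ L²}` of its adjoint and `‖EM_u f‖ = ‖(EM_u)* f‖` there) iff `u` is
a.e. equal to an `m`-measurable function.  Here `P = condExpL2` is the orthogonal projection
onto the `m`-measurable elements of `L²(μ)`. -/
theorem stmt7 (m : MeasurableSpace X) [m0 : MeasurableSpace X] (hm : m ≤ m0)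
    (μ : Measure X) [SigmaFinite μ] [SigmaFinite (μ.trim hm)]
    (u : X → ℂ) (hu : Measurable u)
    (g : X → ℝ≥0∞) (hgm : Measurable[m] g)
    (hg : ∀ A : Set X, MeasurableSet[m] A →
      ∫⁻ x in A, (‖u x‖₊ : ℝ≥0∞) ^ 2 ∂μ = ∫⁻ x in A, g x ∂μ)
    (hgfin : ∀ᵐ x ∂μ, g x < ⊤) :
    ((∀ f : Lp ℂ 2 μ,
        ((∃ gf : X → ℂ, IsWCE m μ u (f : X → ℂ) gf) ↔
          MemLp (fun x => (starRingEnd ℂ) (u x) * (↑(condExpL2 ℂ ℂ hm f) : Lp ℂ 2 μ) x) 2 μ)) ∧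
      (∀ (f : Lp ℂ 2 μ) (gf : X → ℂ), IsWCE m μ u (f : X → ℂ) gf →
        ∫⁻ x, (‖gf x‖₊ : ℝ≥0∞) ^ 2 ∂μ =
          ∫⁻ x, (‖u x‖₊ : ℝ≥0∞) ^ 2 *
            (‖(↑(condExpL2 ℂ ℂ hm f) : Lp ℂ 2 μ) x‖₊ : ℝ≥0∞) ^ 2 ∂μ)) ↔
    (∃ u' : X → ℂ, StronglyMeasurable[m] u' ∧ u =ᵐ[μ] u') := by
  constructor
  · rintro ⟨_h1, h2⟩
    exact fwd m hm μ u hu g hgm hg hgfin h2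
  · rintro ⟨u', hu'm, hu'ae⟩
    exact bwd m hm μ u hu g hgm hg hgfin u' hu'm hu'ae
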